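/- Let 𝒳, 𝒴, 𝒵 be finite-dimensional complex Hilbert spaces and let U be a unitary operator on 𝒳⊗𝒴⊗𝒵 that is 𝒴→𝒳 causal. Then for every unitary operator X on 𝒳 there exists a unitary operator W on 𝒳⊗𝒴 such that U*(X⊗1_{𝒴⊗𝒵})U = W⊗1_𝒵. -/

import Mathlib

open Matrix
open scoped Kronecker ComplexOrder

/-- The partial trace over the factor `𝒵` of an operator on `𝒳 ⊗ 𝒴 ⊗ 𝒵`,
represented as a matrix over the index set `(ιX × ιY) × ιZ`. -/
noncomputable def ptraceZ3 {ιX ιY ιZ : Type*} [Fintype ιZ]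
    (M : Matrix ((ιX × ιY) × ιZ) ((ιX × ιY) × ιZ) ℂ) :
    Matrix (ιX × ιY) (ιX × ιY) ℂ :=
  Matrix.of fun w w' => ∑ z, M (w, z) (w', z)

/-- The partial trace over the factor `𝒴 ⊗ 𝒵` of an operator on `𝒳 ⊗ 𝒴 ⊗ 𝒵`. -/
noncomputable def ptraceYZ3 {ιX ιY ιZ : Type*} [Fintype ιY] [Fintype ιZ]
    (M : Matrix ((ιX × ιY) × ιZ) ((ιX × ιY) × ιZ) ℂ) :
    Matrix ιX ιX ℂ :=
  Matrix.of fun x x' => ∑ y, ∑ z, M ((x, y), z) ((x', y), z)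

/-- `U` is `𝒴 → 𝒳` causal on the subspace `V ⊆ 𝒳 ⊗ 𝒴 ⊗ 𝒵`: for all density operators
`ρ, σ` supported on `V` with equal partial traces over `𝒵`, the states
`U ρ U*` and `U σ U*` have equal partial traces over `𝒴 ⊗ 𝒵`. -/
def IsCausalOn {ιX ιY ιZ : Type*} [Fintype ιX] [Fintype ιY] [Fintype ιZ]
    (U : Matrix ((ιX × ιY) × ιZ) ((ιX × ιY) × ιZ) ℂ)
    (V : Submodule ℂ (((ιX × ιY) × ιZ) → ℂ)) : Prop :=
  ∀ ρ σ : Matrix ((ιX × ιY) × ιZ) ((ιX × ιY) × ιZ) ℂ,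
    ρ.PosSemidef → ρ.trace = 1 → LinearMap.range ρ.mulVecLin ≤ V →
    σ.PosSemidef → σ.trace = 1 → LinearMap.range σ.mulVecLin ≤ V →
    ptraceZ3 ρ = ptraceZ3 σ →
    ptraceYZ3 (U * ρ * Uᴴ) = ptraceYZ3 (U * σ * Uᴴ)

/-! ### Auxiliary lemmas -/

set_option linter.unusedSectionVars false

section Aux

variable {n : Type*} [Fintype n] [DecidableEq n]

lemma star_ite' (c : Prop) [Decidable c] (x y : ℂ) :
    star (if c then x else y) = if c then star x else star y := by
  split_ifs <;> rfl

/-- The rank-one operator `v v*`. -/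
noncomputable def auxOuter (v : n → ℂ) : Matrix n n ℂ := Matrix.of fun p q => v p * star (v q)

lemma auxOuter_posSemidef (v : n → ℂ) : (auxOuter v).PosSemidef := by
  rw [Matrix.posSemidef_iff_dotProduct_mulVec]
  constructor
  · ext p q
    simp [auxOuter, Matrix.conjTranspose_apply, mul_comm]
  · intro x
    have h : star x ⬝ᵥ (auxOuter v).mulVec x
        = star (∑ q, star (v q) * x q) * (∑ q, star (v q) * x q) := by
      simp only [dotProduct, Matrix.mulVec, auxOuter, Matrix.of_apply, star_sum,
        StarMul.star_mul, star_star, Pi.star_apply, Finset.sum_mul, Finset.mul_sum]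
      rw [Finset.sum_comm]
      refine Finset.sum_congr rfl fun p _ => Finset.sum_congr rfl fun q _ => by ring
    rw [h]
    exact star_mul_self_nonneg _

lemma auxOuter_trace (v : n → ℂ) : (auxOuter v).trace = ∑ p, star (v p) * v p := by
  simp [auxOuter, Matrix.trace, Matrix.diag, mul_comm]

lemma trace_mul_auxOuter (G : Matrix n n ℂ) (v : n → ℂ) :
    (G * auxOuter v).trace = ∑ p, star (v p) * ∑ q, v q * G p q := by
  simp only [Matrix.trace, Matrix.diag, Matrix.mul_apply, auxOuter, Matrix.of_apply,
    Finset.mul_sum]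
  refine Finset.sum_congr rfl fun p _ => Finset.sum_congr rfl fun q _ => by ring

lemma sum_two (a b : n) (hab : a ≠ b) (c1 c2 : ℂ) (f : n → ℂ) :
    (∑ p, (if p = a then c1 else if p = b then c2 else 0) * f p) = c1 * f a + c2 * f b := by
  have h : ∀ p, (if p = a then c1 else if p = b then c2 else 0) * f p
      = (if p = a then c1 * f a else 0) + (if p = b then c2 * f b else 0) := by
    intro p
    by_cases h1 : p = a <;> by_cases h2 : p = b <;> simp_all
  simp [h, Finset.sum_add_distrib, Finset.sum_ite_eq']

lemma sum_one (a : n) (c1 : ℂ) (f : n → ℂ) :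
    (∑ p, (if p = a then c1 else 0) * f p) = c1 * f a := by
  have h : ∀ p, (if p = a then c1 else 0) * f p = (if p = a then c1 * f a else 0) := by
    intro p; by_cases h1 : p = a <;> simp_all
  simp [h, Finset.sum_ite_eq']

lemma trace_G_pair (G : Matrix n n ℂ) {a b : n} (hab : a ≠ b) (c1 c2 : ℂ) :
    (G * auxOuter (fun p => if p = a then c1 else if p = b then c2 else 0)).trace
      = star c1 * (c1 * G a a + c2 * G a b) + star c2 * (c1 * G b a + c2 * G b b) := by
  rw [trace_mul_auxOuter]
  have hst : ∀ p : n, star (if p = a then c1 else if p = b then c2 else 0)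
      = (if p = a then star c1 else if p = b then star c2 else 0) := by
    intro p; split_ifs <;> simp
  simp only [hst]
  rw [sum_two a b hab (star c1) (star c2) (fun p => ∑ q, (if q = a then c1 else
    if q = b then c2 else 0) * G p q)]
  rw [sum_two a b hab c1 c2 (fun q => G a q), sum_two a b hab c1 c2 (fun q => G b q)]

lemma trace_G_single (G : Matrix n n ℂ) (a : n) (c1 : ℂ) :
    (G * auxOuter (fun p => if p = a then c1 else 0)).trace = star c1 * (c1 * G a a) := by
  rw [trace_mul_auxOuter]
  have hst : ∀ p : n, star (if p = a then c1 else 0)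
      = (if p = a then star c1 else 0) := by
    intro p; split_ifs <;> simp
  simp only [hst]
  rw [sum_one a (star c1) (fun p => ∑ q, (if q = a then c1 else 0) * G p q)]
  rw [sum_one a c1 (fun q => G a q)]

lemma trace_auxOuter_pair {a b : n} (hab : a ≠ b) (c1 c2 : ℂ) :
    (auxOuter (fun p => if p = a then c1 else if p = b then c2 else 0)).trace
      = star c1 * c1 + star c2 * c2 := by
  rw [auxOuter_trace]
  have hst : ∀ p : n, star (if p = a then c1 else if p = b then c2 else 0)
      = (if p = a then star c1 else if p = b then star c2 else 0) := by
    intro p; split_ifs <;> simp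
  simp only [hst]
  rw [sum_two a b hab (star c1) (star c2) (fun p => if p = a then c1 else if p = b
    then c2 else 0)]
  simp [hab, Ne.symm hab]

lemma trace_auxOuter_single (a : n) (c1 : ℂ) :
    (auxOuter (fun p => if p = a then c1 else 0)).trace = star c1 * c1 := by
  rw [auxOuter_trace]
  have hst : ∀ p : n, star (if p = a then c1 else 0) = (if p = a then star c1 else 0) := by
    intro p; split_ifs <;> simp
  simp only [hst]
  rw [sum_one a (star c1) (fun p => if p = a then c1 else 0)]
  simp

lemma ite_mul_ite_same (c : Prop) [Decidable c] (a b : ℂ) :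
    (if c then a else 0) * (if c then b else 0) = if c then a * b else 0 := by
  split_ifs <;> simp

end Aux

section AuxP

variable {ιX ιY ιZ : Type*} [Fintype ιX] [Fintype ιY] [Fintype ιZ]
    [DecidableEq ιX] [DecidableEq ιY] [DecidableEq ιZ]

lemma ptraceZ3_add (M N : Matrix ((ιX × ιY) × ιZ) ((ιX × ιY) × ιZ) ℂ) :
    ptraceZ3 (M + N) = ptraceZ3 M + ptraceZ3 N := by
  ext w w'
  simp [ptraceZ3, Finset.sum_add_distrib]

lemma kron_conjT {l m p q : Type*} (A : Matrix l m ℂ) (B : Matrix p q ℂ) :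
    (A ⊗ₖ B)ᴴ = Aᴴ ⊗ₖ Bᴴ := by
  ext ⟨i, j⟩ ⟨k, r⟩
  simp [Matrix.conjTranspose_apply, Matrix.kroneckerMap_apply, StarMul.star_mul, mul_comm]

lemma pairing (X : Matrix ιX ιX ℂ) (M : Matrix ((ιX × ιY) × ιZ) ((ιX × ιY) × ιZ) ℂ) :
    (((X ⊗ₖ (1 : Matrix ιY ιY ℂ)) ⊗ₖ (1 : Matrix ιZ ιZ ℂ)) * M).trace
      = (X * ptraceYZ3 M).trace := by
  simp only [Matrix.trace, Matrix.diag, Matrix.mul_apply, ptraceYZ3, Matrix.of_apply,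
    Matrix.kroneckerMap_apply, Matrix.one_apply, Fintype.sum_prod_type, mul_ite, mul_one,
    mul_zero, ite_mul, zero_mul, Finset.sum_ite_irrel, Finset.sum_const_zero,
    Finset.sum_ite_eq, Finset.mem_univ, if_true, Finset.mul_sum]
  refine Finset.sum_congr rfl fun x _ => ?_
  rw [show (∑ y : ιY, ∑ z : ιZ, ∑ x3 : ιX, X x x3 * M ((x3, y), z) ((x, y), z))
      = ∑ y : ιY, ∑ x3 : ιX, ∑ z : ιZ, X x x3 * M ((x3, y), z) ((x, y), z) from
    Finset.sum_congr rfl fun y _ => Finset.sum_comm]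
  rw [Finset.sum_comm]

/-- The `v`-vector supported on a single pair of indices, localized at `z`-coordinate `zz`. -/
lemma vpair_eq (w w' : ιX × ιY) (zz : ιZ) (c1 c2 : ℂ) (u : ιX × ιY) (ζ : ιZ) :
    (if ((u, ζ) : (ιX × ιY) × ιZ) = (w, zz) then c1 else if (u, ζ) = (w', zz) then c2 else 0)
      = if ζ = zz then (if u = w then c1 else if u = w' then c2 else 0) else 0 := by
  by_cases h1 : u = w <;> by_cases h2 : u = w' <;> by_cases h3 : ζ = zz <;>
    simp_all [Prod.ext_iff]

lemma vsingle_eq (w : ιX × ιY) (zz : ιZ) (c1 : ℂ) (u : ιX × ιY) (ζ : ιZ) :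
    (if ((u, ζ) : (ιX × ιY) × ιZ) = (w, zz) then c1 else 0)
      = if ζ = zz then (if u = w then c1 else 0) else 0 := by
  by_cases h1 : u = w <;> by_cases h3 : ζ = zz <;> simp_all [Prod.ext_iff]

lemma ptraceZ3_pair_indep (w w' : ιX × ιY) (z z0 : ιZ) (c1 c2 : ℂ) :
    ptraceZ3 (auxOuter (fun p => if p = (w, z) then c1 else if p = (w', z) then c2 else 0))
      = ptraceZ3 (auxOuter (fun p => if p = (w, z0) then c1 else
          if p = (w', z0) then c2 else 0)) := by
  ext w1 w1'
  simp only [ptraceZ3, auxOuter, Matrix.of_apply]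
  simp only [vpair_eq, star_ite', star_zero, ite_mul_ite_same, Finset.sum_ite_eq',
    Finset.mem_univ, if_true]

lemma ptraceZ3_single_indep (w : ιX × ιY) (z z0 : ιZ) (c1 : ℂ) :
    ptraceZ3 (auxOuter (fun p => if p = (w, z) then c1 else 0))
      = ptraceZ3 (auxOuter (fun p => if p = (w, z0) then c1 else 0)) := by
  ext w1 w1'
  simp only [ptraceZ3, auxOuter, Matrix.of_apply]
  simp only [vsingle_eq, star_ite', star_zero, ite_mul_ite_same, Finset.sum_ite_eq',
    Finset.mem_univ, if_true]

lemma ptraceZ3_pair_split (w w' : ιX × ιY) (z z' : ιZ) (hzz' : z ≠ z') (c1 c2 : ℂ) :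
    ptraceZ3 (auxOuter (fun p => if p = (w, z) then c1 else if p = (w', z') then c2 else 0))
      = ptraceZ3 (auxOuter (fun p => if p = (w, z) then c1 else 0))
        + ptraceZ3 (auxOuter (fun p => if p = (w', z') then c2 else 0)) := by
  ext w1 w1'
  simp only [ptraceZ3, auxOuter, Matrix.of_apply, Matrix.add_apply]
  rw [← Finset.sum_add_distrib]
  refine Finset.sum_congr rfl fun ζ _ => ?_
  by_cases h1 : w1 = w <;> by_cases h2 : w1 = w' <;> by_cases h3 : w1' = w <;>
    by_cases h4 : w1' = w' <;> by_cases h5 : ζ = z <;> by_cases h6 : ζ = z' <;>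
    simp_all [Prod.ext_iff]

end AuxP

/-- If `U` is a unitary on `𝒳 ⊗ 𝒴 ⊗ 𝒵` that is `𝒴 → 𝒳` causal (on the whole space), then
for every unitary `X` on `𝒳` there is a unitary `W` on `𝒳 ⊗ 𝒴` such that
`U*(X ⊗ 1_{𝒴⊗𝒵})U = W ⊗ 1_𝒵`. -/
theorem statement5 {ιX ιY ιZ : Type*} [Fintype ιX] [Fintype ιY] [Fintype ιZ]
    [DecidableEq ιX] [DecidableEq ιY] [DecidableEq ιZ]
    (U : Matrix ((ιX × ιY) × ιZ) ((ιX × ιY) × ιZ) ℂ)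
    (hU : U ∈ Matrix.unitaryGroup ((ιX × ιY) × ιZ) ℂ)
    (hUcausal : IsCausalOn U (⊤ : Submodule ℂ (((ιX × ιY) × ιZ) → ℂ)))
    (X : Matrix ιX ιX ℂ)
    (hX : X ∈ Matrix.unitaryGroup ιX ℂ) :
    ∃ W ∈ Matrix.unitaryGroup (ιX × ιY) ℂ,
      Uᴴ * ((X ⊗ₖ (1 : Matrix ιY ιY ℂ)) ⊗ₖ (1 : Matrix ιZ ιZ ℂ)) * U =
        W ⊗ₖ (1 : Matrix ιZ ιZ ℂ) := by
  classical
  rcases isEmpty_or_nonempty ιZ with hZe | hZn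
  · refine ⟨1, one_mem _, ?_⟩
    ext p q
    exact (IsEmpty.false p.2).elim
  obtain ⟨z0⟩ := hZn
  set K : Matrix ((ιX × ιY) × ιZ) ((ιX × ιY) × ιZ) ℂ :=
    (X ⊗ₖ (1 : Matrix ιY ιY ℂ)) ⊗ₖ (1 : Matrix ιZ ιZ ℂ) with hKdef
  set G : Matrix ((ιX × ιY) × ιZ) ((ιX × ιY) × ιZ) ℂ := Uᴴ * K * U with hGdef
  have hI : Complex.I * Complex.I = -1 := Complex.I_mul_I
  -- trace rearrangement
  have rear : ∀ ρ : Matrix ((ιX × ιY) × ιZ) ((ιX × ιY) × ιZ) ℂ,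
      (G * ρ).trace = (X * ptraceYZ3 (U * ρ * Uᴴ)).trace := by
    intro ρ
    rw [← pairing]
    calc (G * ρ).trace = ((Uᴴ * K) * U * ρ).trace := by rw [hGdef, mul_assoc]
      _ = (ρ * (Uᴴ * K) * U).trace := by rw [Matrix.trace_mul_cycle]
      _ = (U * ρ * (Uᴴ * K)).trace := by rw [Matrix.trace_mul_cycle]
      _ = (K * (U * ρ * Uᴴ)).trace := by rw [← mul_assoc, Matrix.trace_mul_comm]
  -- causality in trace form
  have key : ∀ ρ σ : Matrix ((ιX × ιY) × ιZ) ((ιX × ιY) × ιZ) ℂ,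
      ρ.PosSemidef → ρ.trace = 1 → σ.PosSemidef → σ.trace = 1 →
      ptraceZ3 ρ = ptraceZ3 σ → (G * ρ).trace = (G * σ).trace := by
    intro ρ σ hρ hρt hσ hσt hpt
    have h := hUcausal ρ σ hρ hρt le_top hσ hσt le_top hpt
    rw [rear, rear, h]
  -- star of the numerical coefficients
  have st1 : star ((3:ℂ)/5) = 3/5 := by simp
  have st2 : star ((4:ℂ)/5) = 4/5 := by simp
  have st3 : star ((4:ℂ)/5 * Complex.I) = -(4/5 * Complex.I) := by simp
  -- off-diagonal (in `z`) entries of `G` vanish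
  have hcross : ∀ (w w' : ιX × ιY) (z z' : ιZ), z ≠ z' → G (w, z) (w', z') = 0 := by
    intro w w' z z' hzz'
    have hab : ((w, z) : (ιX × ιY) × ιZ) ≠ (w', z') := fun h => hzz' (congrArg Prod.snd h)
    have mk_e : ∀ c2 : ℂ, star c2 * c2 = 16/25 →
        (G * auxOuter (fun p => if p = ((w, z) : (ιX × ιY) × ιZ) then (3/5 : ℂ)
            else if p = (w', z') then c2 else 0)).trace
          = (G * (auxOuter (fun p => if p = ((w, z) : (ιX × ιY) × ιZ) then (3/5 : ℂ) else 0)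
              + auxOuter (fun p => if p = ((w', z') : (ιX × ιY) × ιZ) then c2 else 0))).trace := by
      intro c2 hc2
      refine key _ _ (auxOuter_posSemidef _) ?_
        ((auxOuter_posSemidef _).add (auxOuter_posSemidef _)) ?_ ?_
      · rw [trace_auxOuter_pair hab, st1, hc2]; norm_num
      · rw [Matrix.trace_add, trace_auxOuter_single, trace_auxOuter_single, st1, hc2]
        norm_num
      · rw [ptraceZ3_add]; exact ptraceZ3_pair_split w w' z z' hzz' _ _
    have e1 := mk_e (4/5) (by rw [st2]; norm_num)
    have e2 := mk_e (4/5 * Complex.I) (by rw [st3]; linear_combination (-(16:ℂ)/25) * hI)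
    rw [mul_add, Matrix.trace_add, trace_G_single, trace_G_single, trace_G_pair G hab,
      st1, st2] at e1
    rw [mul_add, Matrix.trace_add, trace_G_single, trace_G_single, trace_G_pair G hab,
      st1, st3] at e2
    linear_combination (25/24 : ℂ) * e1 - (25/24 : ℂ) * Complex.I * e2
      + ((G (w, z) (w', z') - G (w', z') (w, z)) / 2) * hI
  -- diagonal (in `z`) entries of `G` are independent of `z`
  have hdiag1 : ∀ (w : ιX × ιY) (z : ιZ), G (w, z) (w, z) = G (w, z0) (w, z0) := by
    intro w z
    have e := key (auxOuter (fun p => if p = ((w, z) : (ιX × ιY) × ιZ) then (1 : ℂ) else 0))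
      (auxOuter (fun p => if p = ((w, z0) : (ιX × ιY) × ιZ) then (1 : ℂ) else 0))
      (auxOuter_posSemidef _) (by rw [trace_auxOuter_single]; norm_num)
      (auxOuter_posSemidef _) (by rw [trace_auxOuter_single]; norm_num)
      (ptraceZ3_single_indep w z z0 1)
    rw [trace_G_single, trace_G_single] at e
    simpa using e
  have hdiag : ∀ (w w' : ιX × ιY) (z : ιZ), G (w, z) (w', z) = G (w, z0) (w', z0) := by
    intro w w' z
    by_cases hww : w = w'
    · subst hww; exact hdiag1 w z
    · have hab : ((w, z) : (ιX × ιY) × ιZ) ≠ (w', z) := fun h => hww (congrArg Prod.fst h)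
      have hab0 : ((w, z0) : (ιX × ιY) × ιZ) ≠ (w', z0) := fun h => hww (congrArg Prod.fst h)
      have mk_f : ∀ c2 : ℂ, star c2 * c2 = 16/25 →
          (G * auxOuter (fun p => if p = ((w, z) : (ιX × ιY) × ιZ) then (3/5 : ℂ)
              else if p = (w', z) then c2 else 0)).trace
            = (G * auxOuter (fun p => if p = ((w, z0) : (ιX × ιY) × ιZ) then (3/5 : ℂ)
              else if p = (w', z0) then c2 else 0)).trace := by
        intro c2 hc2
        refine key _ _ (auxOuter_posSemidef _) ?_ (auxOuter_posSemidef _) ?_ ?_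
        · rw [trace_auxOuter_pair hab, st1, hc2]; norm_num
        · rw [trace_auxOuter_pair hab0, st1, hc2]; norm_num
        · exact ptraceZ3_pair_indep w w' z z0 _ _
      have f1 := mk_f (4/5) (by rw [st2]; norm_num)
      have f2 := mk_f (4/5 * Complex.I) (by rw [st3]; linear_combination (-(16:ℂ)/25) * hI)
      rw [trace_G_pair G hab, trace_G_pair G hab0, st1, st2] at f1
      rw [trace_G_pair G hab, trace_G_pair G hab0, st1, st3] at f2
      have hda := hdiag1 w z
      have hdb := hdiag1 w' z
      linear_combination (25/24 : ℂ) * f1 - (25/24 : ℂ) * Complex.I * f2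
        - (3/8 : ℂ) * (1 - Complex.I) * hda - (2/3 : ℂ) * (1 + Complex.I ^ 3) * hdb
        + ((G (w, z) (w', z) - G (w', z) (w, z) - G (w, z0) (w', z0)
            + G (w', z0) (w, z0)) / 2) * hI
  -- the factorization
  have hmat : G = (Matrix.of fun w w' => G (w, z0) (w', z0)) ⊗ₖ (1 : Matrix ιZ ιZ ℂ) := by
    ext p q
    obtain ⟨w, z⟩ := p
    obtain ⟨w', z'⟩ := q
    by_cases hz : z = z'
    · subst hz
      simp only [Matrix.kroneckerMap_apply, Matrix.of_apply, Matrix.one_apply_eq, mul_one]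
      exact hdiag w w' z
    · simp only [Matrix.kroneckerMap_apply, Matrix.of_apply, Matrix.one_apply_ne hz, mul_zero]
      exact hcross w w' z z' hz
  -- unitarity
  have hKU : K ∈ Matrix.unitaryGroup ((ιX × ιY) × ιZ) ℂ := by
    rw [Matrix.mem_unitaryGroup_iff', Matrix.star_eq_conjTranspose, hKdef, kron_conjT,
      kron_conjT, ← Matrix.mul_kronecker_mul, ← Matrix.mul_kronecker_mul]
    have hX' : Xᴴ * X = 1 := by
      rw [← Matrix.star_eq_conjTranspose]; exact Matrix.mem_unitaryGroup_iff'.mp hX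
    simp [hX']
  have hGU : G ∈ Matrix.unitaryGroup ((ιX × ιY) × ιZ) ℂ := by
    rw [hGdef]
    have hUH : Uᴴ ∈ Matrix.unitaryGroup ((ιX × ιY) × ιZ) ℂ := by
      rw [← Matrix.star_eq_conjTranspose]; exact Unitary.star_mem hU
    exact mul_mem (mul_mem hUH hKU) hU
  have hWK : ((Matrix.of fun w w' => G (w, z0) (w', z0)) ⊗ₖ (1 : Matrix ιZ ιZ ℂ))
      ∈ Matrix.unitaryGroup ((ιX × ιY) × ιZ) ℂ := hmat ▸ hGU
  have h1 := Matrix.mem_unitaryGroup_iff'.mp hWK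
  rw [Matrix.star_eq_conjTranspose, kron_conjT, Matrix.conjTranspose_one,
    ← Matrix.mul_kronecker_mul, one_mul] at h1
  refine ⟨Matrix.of fun w w' => G (w, z0) (w', z0), ?_, hmat⟩
  rw [Matrix.mem_unitaryGroup_iff', Matrix.star_eq_conjTranspose]
  ext w w'
  have h2 := Matrix.ext_iff.mpr h1 (w, z0) (w', z0)
  rw [Matrix.kroneckerMap_apply, Matrix.one_apply_eq, mul_one] at h2
  rw [h2]
  by_cases hww : w = w' <;> simp [Matrix.one_apply, hww, Prod.ext_iff]
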